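/- Suppose there is a constant C such that ‖(sx, sy)‖_α ≤ C‖s‖_∞‖(x,y)‖_α for every bounded scalar sequence s (acting by coordinatewise multiplication) and every (x,y) ∈ Z_α. Then the odd/even splitting map U(x,y) := ((U^odd x, U^odd y), (U^even x, U^even y)), where (U^odd x)_k = ξ_{2k−1} and (U^even x)_k = ξ_{2k}, is a bijection from Z_α onto Z_α ⊕ Z_α with ‖U(x,y)‖ ≤ 2C‖(x,y)‖_α; hence Z_α is isomorphic to its square. -/

import Mathlib

/-- `f_α(t) = t^(1+iα) = t·exp(iα·log t)` for `t ≠ 0`, and `f_α(0) = 0`. -/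
noncomputable def falpha (α : ℝ) (t : ℝ) : ℂ :=
  if t = 0 then 0 else (t : ℂ) * Complex.exp (Complex.I * α * Real.log t)

/-- The `ℓ²`-norm of a complex sequence (junk value if not square-summable). -/
noncomputable def norm2 (x : ℕ → ℂ) : ℝ := (∑' k, ‖x k‖ ^ 2) ^ (1 / 2 : ℝ)

/-- Kalton's map `Ω_α` on complex sequences. -/
noncomputable def OmegaSeq (α : ℝ) (x : ℕ → ℂ) : ℕ → ℂ := fun k =>
  if x k = 0 then 0 else x k * falpha α (Real.log (norm2 x / ‖x k‖))

/-- The quasi-norm of `Z_α`: `‖(x,y)‖_α = ‖x‖₂ + ‖y − Ω_α(x)‖₂`. -/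
noncomputable def Znorm (α : ℝ) (p : (ℕ → ℂ) × (ℕ → ℂ)) : ℝ :=
  norm2 p.1 + norm2 (p.2 - OmegaSeq α p.1)

/-- The space `Z_α`: pairs `(x,y)` with `x ∈ ℓ²` and `y − Ω_α(x) ∈ ℓ²`. -/
def ZSet (α : ℝ) : Set ((ℕ → ℂ) × (ℕ → ℂ)) :=
  {p | Memℓp p.1 2 ∧ Memℓp (p.2 - OmegaSeq α p.1) 2}

/-- The odd-entry part of a sequence. -/
def Uodd (x : ℕ → ℂ) : ℕ → ℂ := fun k => x (2 * k)

/-- The even-entry part of a sequence. -/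
def Ueven (x : ℕ → ℂ) : ℕ → ℂ := fun k => x (2 * k + 1)

/-- The odd/even splitting map on pairs of sequences. -/
def Umap (p : (ℕ → ℂ) × (ℕ → ℂ)) :
    ((ℕ → ℂ) × (ℕ → ℂ)) × ((ℕ → ℂ) × (ℕ → ℂ)) :=
  ((Uodd p.1, Uodd p.2), (Ueven p.1, Ueven p.2))

lemma falpha_eq (α t : ℝ) : falpha α t = (t : ℂ) * Complex.exp (Complex.I * α * Real.log t) := by
  unfold falpha; split <;> simp [*]

lemma norm_exp_I_mul (a b : ℝ) : ‖Complex.exp (Complex.I * a * b)‖ = 1 := by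
  rw [Complex.norm_exp]
  simp [Complex.mul_re, Complex.mul_im]

lemma norm_falpha (α t : ℝ) : ‖falpha α t‖ = |t| := by
  rw [falpha_eq, norm_mul, norm_exp_I_mul]
  simp [Real.norm_eq_abs]

lemma falpha_neg (α t : ℝ) : falpha α (-t) = -falpha α t := by
  rw [falpha_eq, falpha_eq, Real.log_neg_eq_log]
  push_cast
  ring

lemma exp_chord (u v : ℝ) :
    ‖Complex.exp (Complex.I * u) - Complex.exp (Complex.I * v)‖ ≤ 2 * |u - v| := by
  have h1 : Complex.exp (Complex.I * u) - Complex.exp (Complex.I * v)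
      = Complex.exp (Complex.I * v) * (Complex.exp (Complex.I * (u - v)) - 1) := by
    rw [mul_sub, ← Complex.exp_add, mul_one]
    ring_nf
  rw [h1, norm_mul]
  have h2 : ‖Complex.exp (Complex.I * (v:ℂ))‖ = 1 := by
    rw [Complex.norm_exp]; simp [Complex.mul_re]
  rw [h2, one_mul]
  have habs : ‖Complex.I * ((u - v : ℝ) : ℂ)‖ = |u - v| := by
    rw [norm_mul, Complex.norm_I, one_mul, Complex.norm_real, Real.norm_eq_abs]
  by_cases hle : |u - v| ≤ 1
  · have := Complex.norm_exp_sub_one_le (x := Complex.I * ((u - v : ℝ) : ℂ)) (by rw [habs]; exact hle)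
    rw [habs] at this
    calc ‖Complex.exp (Complex.I * ((u:ℂ) - v)) - 1‖
        = ‖Complex.exp (Complex.I * ((u - v:ℝ):ℂ)) - 1‖ := by push_cast; rfl
      _ ≤ 2 * |u - v| := this
  · push_neg at hle
    have h3 : ‖Complex.exp (Complex.I * ((u:ℂ) - v)) - 1‖ ≤ 2 := by
      calc ‖Complex.exp (Complex.I * ((u:ℂ) - v)) - 1‖
          ≤ ‖Complex.exp (Complex.I * ((u:ℂ) - v))‖ + ‖(1:ℂ)‖ := norm_sub_le _ _
        _ ≤ 2 := by
            have : ‖Complex.exp (Complex.I * ((u:ℂ) - v))‖ = 1 := by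
              rw [Complex.norm_exp]; simp [Complex.mul_re]
            rw [this]; norm_num
    linarith

lemma falpha_lip_key (α : ℝ) {a b : ℝ} (hb : 0 ≤ b) (hba : b ≤ a) :
    ‖falpha α a - falpha α b‖ ≤ (1 + 2 * |α|) * |a - b| := by
  have key : falpha α a - falpha α b
      = ((a - b : ℝ) : ℂ) * Complex.exp (Complex.I * α * Real.log a)
        + (b : ℂ) * (Complex.exp (Complex.I * α * Real.log a)
            - Complex.exp (Complex.I * α * Real.log b)) := by
    rw [falpha_eq, falpha_eq]; push_cast; ring
  rw [key]
  have h1 : ‖((a - b : ℝ) : ℂ) * Complex.exp (Complex.I * α * Real.log a)‖ = |a - b| := by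
    rw [norm_mul]
    have : ‖Complex.exp (Complex.I * α * Real.log a)‖ = 1 := by
      rw [Complex.norm_exp]; simp [Complex.mul_re, Complex.mul_im]
    rw [this, mul_one, Complex.norm_real, Real.norm_eq_abs]
  have h2 : ‖Complex.exp (Complex.I * α * Real.log a)
      - Complex.exp (Complex.I * α * Real.log b)‖ ≤ 2 * |α| * |Real.log a - Real.log b| := by
    have e1 : (Complex.I * α * Real.log a) = Complex.I * ((α * Real.log a : ℝ) : ℂ) := by
      push_cast; ring
    have e2 : (Complex.I * α * Real.log b) = Complex.I * ((α * Real.log b : ℝ) : ℂ) := by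
      push_cast; ring
    rw [e1, e2]
    calc ‖Complex.exp (Complex.I * ((α * Real.log a : ℝ):ℂ))
        - Complex.exp (Complex.I * ((α * Real.log b : ℝ):ℂ))‖
        ≤ 2 * |α * Real.log a - α * Real.log b| := exp_chord _ _
      _ = 2 * |α| * |Real.log a - Real.log b| := by
          rw [← mul_sub, abs_mul]; ring
  have h3 : b * |Real.log a - Real.log b| ≤ a - b := by
    rcases eq_or_lt_of_le hb with h | hb'
    · simp [← h]; linarith
    · have ha' : 0 < a := lt_of_lt_of_le hb' hba
      have hlog : Real.log b ≤ Real.log a := Real.log_le_log hb' hba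
      rw [abs_of_nonneg (by linarith)]
      have hdiv : Real.log a - Real.log b = Real.log (a / b) := (Real.log_div (ne_of_gt ha') (ne_of_gt hb')).symm
      rw [hdiv]
      have := Real.log_le_sub_one_of_pos (div_pos ha' hb')
      calc b * Real.log (a / b) ≤ b * (a / b - 1) := by
            apply mul_le_mul_of_nonneg_left this (le_of_lt hb')
        _ = a - b := by field_simp
  calc ‖((a - b : ℝ) : ℂ) * Complex.exp (Complex.I * α * Real.log a)
        + (b : ℂ) * (Complex.exp (Complex.I * α * Real.log a)
            - Complex.exp (Complex.I * α * Real.log b))‖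
      ≤ ‖((a - b : ℝ) : ℂ) * Complex.exp (Complex.I * α * Real.log a)‖
        + ‖(b : ℂ) * (Complex.exp (Complex.I * α * Real.log a)
            - Complex.exp (Complex.I * α * Real.log b))‖ := norm_add_le _ _
    _ ≤ |a - b| + b * (2 * |α| * |Real.log a - Real.log b|) := by
        rw [h1, norm_mul, Complex.norm_real, Real.norm_eq_abs, abs_of_nonneg hb]
        have := mul_le_mul_of_nonneg_left h2 hb
        linarith
    _ ≤ |a - b| + 2 * |α| * (a - b) := by
        have := mul_le_mul_of_nonneg_left h3 (by positivity : (0:ℝ) ≤ 2 * |α|)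
        nlinarith [abs_nonneg α, h3]
    _ ≤ (1 + 2 * |α|) * |a - b| := by
        rw [abs_of_nonneg (by linarith : (0:ℝ) ≤ a - b)]
        ring_nf
        nlinarith [abs_nonneg α]

lemma falpha_lip (α a b : ℝ) : ‖falpha α a - falpha α b‖ ≤ (1 + 2 * |α|) * |a - b| := by
  have L1 : (1:ℝ) ≤ 1 + 2 * |α| := by nlinarith [abs_nonneg α]
  -- wlog b ≤ a
  rcases le_total b a with hba | hab
  · rcases le_or_gt 0 b with hb | hb
    · exact falpha_lip_key α hb hba
    · rcases le_or_gt a 0 with ha | ha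
      · -- b ≤ a ≤ 0
        have key := falpha_lip_key α (b := -a) (a := -b) (by linarith) (by linarith)
        rw [falpha_neg, falpha_neg] at key
        calc ‖falpha α a - falpha α b‖ = ‖-falpha α b - -falpha α a‖ := by
              rw [show -falpha α b - -falpha α a = falpha α a - falpha α b by ring]
          _ ≤ (1 + 2 * |α|) * |-b - -a| := key
          _ = (1 + 2 * |α|) * |a - b| := by rw [show -b - -a = -(b - a) by ring, abs_neg, abs_sub_comm]
      · -- b < 0 < a
        calc ‖falpha α a - falpha α b‖ ≤ ‖falpha α a‖ + ‖falpha α b‖ := norm_sub_le _ _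
          _ = |a| + |b| := by rw [norm_falpha, norm_falpha]
          _ = |a - b| := by rw [abs_of_nonneg (le_of_lt ha), abs_of_neg hb,
              abs_of_nonneg (by linarith : (0:ℝ) ≤ a - b)]; ring
          _ ≤ (1 + 2 * |α|) * |a - b| := le_mul_of_one_le_left (abs_nonneg _) L1
  · rw [norm_sub_rev, abs_sub_comm]
    rcases le_or_gt 0 a with ha | ha
    · exact falpha_lip_key α ha hab
    · rcases le_or_gt b 0 with hb | hb
      · have key := falpha_lip_key α (b := -b) (a := -a) (by linarith) (by linarith)
        rw [falpha_neg, falpha_neg] at key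
        calc ‖falpha α b - falpha α a‖ = ‖-falpha α a - -falpha α b‖ := by
              rw [show -falpha α a - -falpha α b = falpha α b - falpha α a by ring]
          _ ≤ (1 + 2 * |α|) * |-a - -b| := key
          _ = (1 + 2 * |α|) * |b - a| := by rw [show -a - -b = -(a - b) by ring, abs_neg, abs_sub_comm]
      · calc ‖falpha α b - falpha α a‖ ≤ ‖falpha α b‖ + ‖falpha α a‖ := norm_sub_le _ _
          _ = |b| + |a| := by rw [norm_falpha, norm_falpha]
          _ = |b - a| := by rw [abs_of_nonneg (le_of_lt hb), abs_of_neg ha,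
              abs_of_nonneg (by linarith : (0:ℝ) ≤ b - a)]; ring
          _ ≤ (1 + 2 * |α|) * |b - a| := le_mul_of_one_le_left (abs_nonneg _) L1

lemma mem2_iff {f : ℕ → ℂ} : Memℓp f 2 ↔ Summable fun n => ‖f n‖ ^ 2 := by
  rw [memℓp_gen_iff (by norm_num)]
  have : ∀ n : ℕ, ‖f n‖ ^ (2 : ENNReal).toReal = ‖f n‖ ^ 2 := by
    intro n
    rw [show (2 : ENNReal).toReal = ((2:ℕ):ℝ) by norm_num, Real.rpow_natCast]
  exact summable_congr this

lemma norm2_pos {x : ℕ → ℂ} (hx : Summable fun n => ‖x n‖ ^ 2) (h : x ≠ 0) :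
    0 < norm2 x := by
  obtain ⟨n, hn⟩ : ∃ n, x n ≠ 0 := by
    by_contra hc; push_neg at hc; exact h (funext hc)
  have h1 : (0:ℝ) < ‖x n‖ ^ 2 := pow_pos (norm_pos_iff.mpr hn) 2
  have h2 : ‖x n‖ ^ 2 ≤ ∑' k, ‖x k‖ ^ 2 := hx.le_tsum n fun j _ => by positivity
  exact Real.rpow_pos_of_pos (lt_of_lt_of_le h1 h2) _

/-- mask to the residue class `r` mod 2 -/
def maskr (r : ℕ) (x : ℕ → ℂ) : ℕ → ℂ := fun n => if n % 2 = r then x n else 0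

lemma summable_maskr (r : ℕ) {x : ℕ → ℂ} (hx : Summable fun n => ‖x n‖ ^ 2) :
    Summable fun n => ‖maskr r x n‖ ^ 2 := by
  refine hx.of_nonneg_of_le (fun n => by positivity) (fun n => ?_)
  unfold maskr
  split
  · exact le_refl _
  · simpa using (by positivity : (0:ℝ) ≤ ‖x n‖ ^ 2)

lemma corr_summable (α : ℝ) (r : ℕ) {x : ℕ → ℂ} (hx : Summable fun n => ‖x n‖ ^ 2) :
    Summable fun n => ‖OmegaSeq α (maskr r x) n - maskr r (OmegaSeq α x) n‖ ^ 2 := by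
  by_cases hm : maskr r x = 0
  · have h0 : ∀ n, OmegaSeq α (maskr r x) n - maskr r (OmegaSeq α x) n = 0 := by
      intro n
      have hO : OmegaSeq α (maskr r x) n = 0 := by rw [hm]; simp [OmegaSeq]
      have hM : maskr r (OmegaSeq α x) n = 0 := by
        unfold maskr
        split
        · rename_i hP
          have := congrFun hm n
          simp only [maskr, hP, if_true, Pi.zero_apply] at this
          simp [OmegaSeq, this]
        · rfl
      rw [hO, hM, sub_zero]
    simp only [h0]
    simpa using summable_zero
  · have hxne : x ≠ 0 := by
      intro hx0; apply hm; funext n; simp [maskr, hx0]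
    have hN : 0 < norm2 (maskr r x) := norm2_pos (summable_maskr r hx) hm
    have hN' : 0 < norm2 x := norm2_pos hx hxne
    set L : ℝ := (1 + 2 * |α|) * |Real.log (norm2 (maskr r x)) - Real.log (norm2 x)| with hL
    have hL0 : 0 ≤ L := by positivity
    refine ((hx.mul_left (L ^ 2)).of_nonneg_of_le (fun n => by positivity) (fun n => ?_))
    by_cases hP : n % 2 = r
    · by_cases hxn : x n = 0
      · have h1 : maskr r x n = 0 := by simp [maskr, hP, hxn]
        have h2 : OmegaSeq α (maskr r x) n = 0 := by simp [OmegaSeq, h1]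
        have h3 : maskr r (OmegaSeq α x) n = 0 := by simp [maskr, OmegaSeq, hxn]
        rw [h2, h3, sub_zero]
        simpa using (by positivity : (0:ℝ) ≤ L ^ 2 * ‖x n‖ ^ 2)
      · have hmn : maskr r x n = x n := by simp [maskr, hP]
        have e1 : OmegaSeq α (maskr r x) n
            = x n * falpha α (Real.log (norm2 (maskr r x) / ‖x n‖)) := by
          simp [OmegaSeq, hmn, hxn]
        have e2 : maskr r (OmegaSeq α x) n
            = x n * falpha α (Real.log (norm2 x / ‖x n‖)) := by
          simp [maskr, hP, OmegaSeq, hxn]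
        rw [e1, e2, ← mul_sub, norm_mul]
        have hxnn : ‖x n‖ ≠ 0 := norm_ne_zero_iff.mpr hxn
        have hlog : Real.log (norm2 (maskr r x) / ‖x n‖) - Real.log (norm2 x / ‖x n‖)
            = Real.log (norm2 (maskr r x)) - Real.log (norm2 x) := by
          rw [Real.log_div (ne_of_gt hN) hxnn, Real.log_div (ne_of_gt hN') hxnn]
          ring
        have hlip := falpha_lip α (Real.log (norm2 (maskr r x) / ‖x n‖))
          (Real.log (norm2 x / ‖x n‖))
        rw [hlog] at hlip
        have : ‖falpha α (Real.log (norm2 (maskr r x) / ‖x n‖))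
            - falpha α (Real.log (norm2 x / ‖x n‖))‖ ≤ L := hlip
        calc (‖x n‖ * ‖falpha α (Real.log (norm2 (maskr r x) / ‖x n‖))
            - falpha α (Real.log (norm2 x / ‖x n‖))‖) ^ 2
            ≤ (‖x n‖ * L) ^ 2 := by
              apply pow_le_pow_left₀ (by positivity)
              exact mul_le_mul_of_nonneg_left this (norm_nonneg _)
          _ = L ^ 2 * ‖x n‖ ^ 2 := by ring
    · have h1 : maskr r x n = 0 := by simp [maskr, hP]
      have h2 : maskr r (OmegaSeq α x) n = 0 := by simp [maskr, hP]
      have h3 : OmegaSeq α (maskr r x) n = 0 := by simp [OmegaSeq, h1]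
      rw [h2, h3, sub_zero]
      simpa using (by positivity : (0:ℝ) ≤ L ^ 2 * ‖x n‖ ^ 2)

/-- masked membership (forward direction). -/
lemma mask_mem (α : ℝ) (r : ℕ) {x y : ℕ → ℂ} (hx : Memℓp x 2)
    (hy : Memℓp (y - OmegaSeq α x) 2) :
    Memℓp (maskr r y - OmegaSeq α (maskr r x)) 2 := by
  have key : maskr r y - OmegaSeq α (maskr r x)
      = (fun n => maskr r (y - OmegaSeq α x) n
          - (OmegaSeq α (maskr r x) n - maskr r (OmegaSeq α x) n)) := by
    funext n
    by_cases hP : n % 2 = r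
    · simp only [Pi.sub_apply, maskr, hP, if_true]
      ring
    · have h1 : maskr r x n = 0 := by simp [maskr, hP]
      simp only [Pi.sub_apply, maskr, hP, if_false, OmegaSeq, h1, if_true]
      simp
  rw [key]
  apply Memℓp.sub
  · exact mem2_iff.mpr (summable_maskr r (mem2_iff.mp hy))
  · exact mem2_iff.mpr (corr_summable α r (mem2_iff.mp hx))

/-- masked membership (reverse direction, combining both residues). -/
lemma unmask_mem (α : ℝ) {x y : ℕ → ℂ} (hx : Memℓp x 2)
    (h0 : Memℓp (maskr 0 y - OmegaSeq α (maskr 0 x)) 2)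
    (h1 : Memℓp (maskr 1 y - OmegaSeq α (maskr 1 x)) 2) :
    Memℓp (y - OmegaSeq α x) 2 := by
  have key : y - OmegaSeq α x
      = (fun n => (maskr 0 y - OmegaSeq α (maskr 0 x)) n
          + (maskr 1 y - OmegaSeq α (maskr 1 x)) n
          + (OmegaSeq α (maskr 0 x) n - maskr 0 (OmegaSeq α x) n)
          + (OmegaSeq α (maskr 1 x) n - maskr 1 (OmegaSeq α x) n)) := by
    funext n
    have hn : n % 2 = 0 ∨ n % 2 = 1 := by omega
    rcases hn with hP | hP
    · have hP' : n % 2 ≠ 1 := by omega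
      have hm1 : maskr 1 x n = 0 := by simp [maskr, hP']
      have hO1 : OmegaSeq α (maskr 1 x) n = 0 := by simp [OmegaSeq, hm1]
      simp only [Pi.sub_apply, maskr, hP, hP', if_true, if_false, hO1]
      norm_num
    · have hP' : n % 2 ≠ 0 := by omega
      have hm0 : maskr 0 x n = 0 := by simp [maskr, hP']
      have hO0 : OmegaSeq α (maskr 0 x) n = 0 := by simp [OmegaSeq, hm0]
      simp only [Pi.sub_apply, maskr, hP, hP', if_true, if_false, hO0]
      norm_num
  rw [key]
  apply Memℓp.add
  apply Memℓp.add
  apply Memℓp.add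
  · exact h0
  · exact h1
  · exact mem2_iff.mpr (corr_summable α 0 (mem2_iff.mp hx))
  · exact mem2_iff.mpr (corr_summable α 1 (mem2_iff.mp hx))

/-- the restriction to residue class `r`. -/
def rsub (r : ℕ) (z : ℕ → ℂ) : ℕ → ℂ := fun k => z (2 * k + r)

lemma inj_r (r : ℕ) : Function.Injective (fun k : ℕ => 2 * k + r) := by
  intro a b h
  dsimp only at h
  omega

lemma range_r (r : ℕ) (hr : r < 2) (n : ℕ) :
    n ∈ Set.range (fun k : ℕ => 2 * k + r) ↔ n % 2 = r := by
  constructor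
  · rintro ⟨k, rfl⟩
    dsimp only
    omega
  · intro h
    exact ⟨n / 2, by dsimp only; omega⟩

lemma norm2_rsub (r : ℕ) (hr : r < 2) (z : ℕ → ℂ) (hz : ∀ n, n % 2 ≠ r → z n = 0) :
    norm2 (rsub r z) = norm2 z := by
  unfold norm2
  congr 1
  exact (inj_r r).tsum_eq (f := fun n => ‖z n‖ ^ 2) (by
    intro n hn
    by_contra hmem
    have : n % 2 ≠ r := fun h => hmem ((range_r r hr n).mpr h)
    simp [hz n this] at hn)

lemma summable_rsub_iff (r : ℕ) (hr : r < 2) (z : ℕ → ℂ)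
    (hz : ∀ n, n % 2 ≠ r → z n = 0) :
    (Summable fun k => ‖rsub r z k‖ ^ 2) ↔ Summable fun n => ‖z n‖ ^ 2 :=
  (inj_r r).summable_iff (f := fun n => ‖z n‖ ^ 2) (by
    intro n hn
    have : n % 2 ≠ r := fun h => hn ((range_r r hr n).mpr h)
    simp [hz n this])

lemma Omega_rsub (α : ℝ) (r : ℕ) (hr : r < 2) (z : ℕ → ℂ)
    (hz : ∀ n, n % 2 ≠ r → z n = 0) :
    OmegaSeq α (rsub r z) = rsub r (OmegaSeq α z) := by
  funext k
  simp only [OmegaSeq, rsub]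
  rw [norm2_rsub r hr z hz]
  rfl

-- auxiliary structural facts
lemma maskr_supp (r : ℕ) (z : ℕ → ℂ) : ∀ n, n % 2 ≠ r → maskr r z n = 0 := by
  intro n h; simp [maskr, h]

lemma masksub_supp (α : ℝ) (r : ℕ) (x y : ℕ → ℂ) :
    ∀ n, n % 2 ≠ r → (maskr r y - OmegaSeq α (maskr r x)) n = 0 := by
  intro n h
  have h1 : maskr r x n = 0 := maskr_supp r x n h
  have h2 : maskr r y n = 0 := maskr_supp r y n h
  simp [Pi.sub_apply, h2, OmegaSeq, h1]

lemma Uodd_eq (z : ℕ → ℂ) : Uodd z = rsub 0 (maskr 0 z) := by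
  funext k
  have : (2 * k + 0) % 2 = 0 := by omega
  simp [Uodd, rsub, maskr, this]

lemma Ueven_eq (z : ℕ → ℂ) : Ueven z = rsub 1 (maskr 1 z) := by
  funext k
  have : (2 * k + 1) % 2 = 1 := by omega
  simp [Ueven, rsub, maskr, this]

lemma rsub_sub (r : ℕ) (a b : ℕ → ℂ) : rsub r (a - b) = rsub r a - rsub r b := rfl

lemma UoddPair_eq (α : ℝ) (x y : ℕ → ℂ) :
    Uodd y - OmegaSeq α (Uodd x) = rsub 0 (maskr 0 y - OmegaSeq α (maskr 0 x)) := by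
  rw [Uodd_eq x, Uodd_eq y, Omega_rsub α 0 (by norm_num) (maskr 0 x) (maskr_supp 0 x),
    rsub_sub]

lemma UevenPair_eq (α : ℝ) (x y : ℕ → ℂ) :
    Ueven y - OmegaSeq α (Ueven x) = rsub 1 (maskr 1 y - OmegaSeq α (maskr 1 x)) := by
  rw [Ueven_eq x, Ueven_eq y, Omega_rsub α 1 (by norm_num) (maskr 1 x) (maskr_supp 1 x),
    rsub_sub]

lemma mapsTo_r (α : ℝ) {x y : ℕ → ℂ} (hp : (x, y) ∈ ZSet α) :
    (Uodd x, Uodd y) ∈ ZSet α ∧ (Ueven x, Ueven y) ∈ ZSet α := by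
  obtain ⟨hx, hy⟩ := hp
  constructor
  · constructor
    · show Memℓp (Uodd x) 2
      rw [Uodd_eq x]
      exact mem2_iff.mpr ((summable_rsub_iff 0 (by norm_num) _ (maskr_supp 0 x)).mpr
        (summable_maskr 0 (mem2_iff.mp hx)))
    · show Memℓp (Uodd y - OmegaSeq α (Uodd x)) 2
      rw [UoddPair_eq α x y]
      exact mem2_iff.mpr ((summable_rsub_iff 0 (by norm_num) _ (masksub_supp α 0 x y)).mpr
        (mem2_iff.mp (mask_mem α 0 hx hy)))
  · constructor
    · show Memℓp (Ueven x) 2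
      rw [Ueven_eq x]
      exact mem2_iff.mpr ((summable_rsub_iff 1 (by norm_num) _ (maskr_supp 1 x)).mpr
        (summable_maskr 1 (mem2_iff.mp hx)))
    · show Memℓp (Ueven y - OmegaSeq α (Ueven x)) 2
      rw [UevenPair_eq α x y]
      exact mem2_iff.mpr ((summable_rsub_iff 1 (by norm_num) _ (masksub_supp α 1 x y)).mpr
        (mem2_iff.mp (mask_mem α 1 hx hy)))

lemma Znorm_odd (α : ℝ) (x y : ℕ → ℂ) :
    Znorm α (Uodd x, Uodd y) = Znorm α (maskr 0 x, maskr 0 y) := by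
  unfold Znorm
  congr 1
  · show norm2 (Uodd x) = _
    rw [Uodd_eq x]
    exact norm2_rsub 0 (by norm_num) _ (maskr_supp 0 x)
  · show norm2 (Uodd y - OmegaSeq α (Uodd x)) = _
    rw [UoddPair_eq α x y]
    exact norm2_rsub 0 (by norm_num) _ (masksub_supp α 0 x y)

lemma Znorm_even (α : ℝ) (x y : ℕ → ℂ) :
    Znorm α (Ueven x, Ueven y) = Znorm α (maskr 1 x, maskr 1 y) := by
  unfold Znorm
  congr 1
  · show norm2 (Ueven x) = _
    rw [Ueven_eq x]
    exact norm2_rsub 1 (by norm_num) _ (maskr_supp 1 x)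
  · show norm2 (Ueven y - OmegaSeq α (Ueven x)) = _
    rw [UevenPair_eq α x y]
    exact norm2_rsub 1 (by norm_num) _ (masksub_supp α 1 x y)


/-- Assuming multiplication by bounded sequences is bounded on `Z_α` with
constant `C`, the odd/even splitting map is a bijection from `Z_α` onto
`Z_α ⊕ Z_α` satisfying `‖U(x,y)‖ ≤ 2C‖(x,y)‖_α`; hence `Z_α` is isomorphic
to its square. -/
theorem Umap_bijOn_and_bound (α C : ℝ)
    (hC : ∀ (s : ℕ → ℂ) (M : ℝ), (∀ k, ‖s k‖ ≤ M) → ∀ p ∈ ZSet α,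
      Znorm α (fun k => s k * p.1 k, fun k => s k * p.2 k) ≤ C * M * Znorm α p) :
    Set.BijOn Umap (ZSet α) (ZSet α ×ˢ ZSet α) ∧
      ∀ p ∈ ZSet α, Znorm α (Umap p).1 + Znorm α (Umap p).2 ≤ 2 * C * Znorm α p := by
  have hbound : ∀ p ∈ ZSet α, Znorm α (Umap p).1 + Znorm α (Umap p).2 ≤ 2 * C * Znorm α p := by
    intro p hp
    have key : ∀ r : ℕ, Znorm α (maskr r p.1, maskr r p.2) ≤ C * Znorm α p := by
      intro r
      have hs : ∀ k, ‖(fun n => if n % 2 = r then (1:ℂ) else 0) k‖ ≤ 1 := by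
        intro k; dsimp only; split <;> simp
      have := hC (fun n => if n % 2 = r then (1:ℂ) else 0) 1 hs p hp
      have e1 : (fun k => (if k % 2 = r then (1:ℂ) else 0) * p.1 k) = maskr r p.1 := by
        funext k; by_cases h : k % 2 = r <;> simp [maskr, h]
      have e2 : (fun k => (if k % 2 = r then (1:ℂ) else 0) * p.2 k) = maskr r p.2 := by
        funext k; by_cases h : k % 2 = r <;> simp [maskr, h]
      rw [e1, e2] at this
      calc Znorm α (maskr r p.1, maskr r p.2) ≤ C * 1 * Znorm α p := this
        _ = C * Znorm α p := by ring
    have h1 : Znorm α (Umap p).1 = Znorm α (maskr 0 p.1, maskr 0 p.2) := Znorm_odd α p.1 p.2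
    have h2 : Znorm α (Umap p).2 = Znorm α (maskr 1 p.1, maskr 1 p.2) := Znorm_even α p.1 p.2
    rw [h1, h2]
    calc Znorm α (maskr 0 p.1, maskr 0 p.2) + Znorm α (maskr 1 p.1, maskr 1 p.2)
        ≤ C * Znorm α p + C * Znorm α p := add_le_add (key 0) (key 1)
      _ = 2 * C * Znorm α p := by ring
  refine ⟨⟨?_, ?_, ?_⟩, hbound⟩
  · -- MapsTo
    intro p hp
    have := mapsTo_r α (x := p.1) (y := p.2) hp
    exact ⟨this.1, this.2⟩
  · -- InjOn
    intro p hp q hq h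
    have h11 : Uodd p.1 = Uodd q.1 := congrArg (fun z => z.1.1) h
    have h12 : Uodd p.2 = Uodd q.2 := congrArg (fun z => z.1.2) h
    have h21 : Ueven p.1 = Ueven q.1 := congrArg (fun z => z.2.1) h
    have h22 : Ueven p.2 = Ueven q.2 := congrArg (fun z => z.2.2) h
    have hfst : p.1 = q.1 := by
      funext n
      rcases Nat.even_or_odd n with he | ho
      · have hn : n = 2 * (n / 2) := by rcases he with ⟨k, hk⟩; omega
        rw [hn]
        exact congrFun h11 (n / 2)
      · have hn : n = 2 * (n / 2) + 1 := by
          rcases ho with ⟨k, hk⟩; omega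
        rw [hn]
        exact congrFun h21 (n / 2)
    have hsnd : p.2 = q.2 := by
      funext n
      rcases Nat.even_or_odd n with he | ho
      · have hn : n = 2 * (n / 2) := by rcases he with ⟨k, hk⟩; omega
        rw [hn]
        exact congrFun h12 (n / 2)
      · have hn : n = 2 * (n / 2) + 1 := by
          rcases ho with ⟨k, hk⟩; omega
        rw [hn]
        exact congrFun h22 (n / 2)
    exact Prod.ext hfst hsnd
  · -- SurjOn
    intro q hq
    obtain ⟨hq1, hq2⟩ := hq
    set x : ℕ → ℂ := fun n => if n % 2 = 0 then q.1.1 (n / 2) else q.2.1 (n / 2) with hxdef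
    set y : ℕ → ℂ := fun n => if n % 2 = 0 then q.1.2 (n / 2) else q.2.2 (n / 2) with hydef
    have hA0 : rsub 0 (maskr 0 x) = q.1.1 := by
      funext k
      have h1 : (2 * k + 0) % 2 = 0 := by omega
      have h2 : (2 * k + 0) / 2 = k := by omega
      simp [rsub, maskr, hxdef, h1, h2]
    have hA1 : rsub 1 (maskr 1 x) = q.2.1 := by
      funext k
      have h1 : (2 * k + 1) % 2 = 1 := by omega
      have h2 : (2 * k + 1) / 2 = k := by omega
      simp [rsub, maskr, hxdef, h1, h2]
    have hB0 : rsub 0 (maskr 0 y) = q.1.2 := by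
      funext k
      have h1 : (2 * k + 0) % 2 = 0 := by omega
      have h2 : (2 * k + 0) / 2 = k := by omega
      simp [rsub, maskr, hydef, h1, h2]
    have hB1 : rsub 1 (maskr 1 y) = q.2.2 := by
      funext k
      have h1 : (2 * k + 1) % 2 = 1 := by omega
      have h2 : (2 * k + 1) / 2 = k := by omega
      simp [rsub, maskr, hydef, h1, h2]
    have hmx0 : Memℓp (maskr 0 x) 2 := by
      apply mem2_iff.mpr
      apply (summable_rsub_iff 0 (by norm_num) _ (maskr_supp 0 x)).mp
      rw [show (fun k => ‖rsub 0 (maskr 0 x) k‖ ^ 2) = fun k => ‖q.1.1 k‖ ^ 2 by rw [hA0]]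
      exact mem2_iff.mp hq1.1
    have hmx1 : Memℓp (maskr 1 x) 2 := by
      apply mem2_iff.mpr
      apply (summable_rsub_iff 1 (by norm_num) _ (maskr_supp 1 x)).mp
      rw [show (fun k => ‖rsub 1 (maskr 1 x) k‖ ^ 2) = fun k => ‖q.2.1 k‖ ^ 2 by rw [hA1]]
      exact mem2_iff.mp hq2.1
    have hxmem : Memℓp x 2 := by
      have hsum : x = (fun n => maskr 0 x n + maskr 1 x n) := by
        funext n
        by_cases h : n % 2 = 0
        · have h' : n % 2 ≠ 1 := by omega
          simp [maskr, h, h']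
        · have h' : n % 2 = 1 := by omega
          simp [maskr, h, h']
      rw [hsum]
      exact Memℓp.add hmx0 hmx1
    have hOm0 : Memℓp (maskr 0 y - OmegaSeq α (maskr 0 x)) 2 := by
      apply mem2_iff.mpr
      apply (summable_rsub_iff 0 (by norm_num) _ (masksub_supp α 0 x y)).mp
      have e : rsub 0 (maskr 0 y - OmegaSeq α (maskr 0 x)) = q.1.2 - OmegaSeq α q.1.1 := by
        rw [rsub_sub, hB0, ← Omega_rsub α 0 (by norm_num) (maskr 0 x) (maskr_supp 0 x), hA0]
      rw [show (fun k => ‖rsub 0 (maskr 0 y - OmegaSeq α (maskr 0 x)) k‖ ^ 2)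
          = fun k => ‖(q.1.2 - OmegaSeq α q.1.1) k‖ ^ 2 by rw [e]]
      exact mem2_iff.mp hq1.2
    have hOm1 : Memℓp (maskr 1 y - OmegaSeq α (maskr 1 x)) 2 := by
      apply mem2_iff.mpr
      apply (summable_rsub_iff 1 (by norm_num) _ (masksub_supp α 1 x y)).mp
      have e : rsub 1 (maskr 1 y - OmegaSeq α (maskr 1 x)) = q.2.2 - OmegaSeq α q.2.1 := by
        rw [rsub_sub, hB1, ← Omega_rsub α 1 (by norm_num) (maskr 1 x) (maskr_supp 1 x), hA1]
      rw [show (fun k => ‖rsub 1 (maskr 1 y - OmegaSeq α (maskr 1 x)) k‖ ^ 2)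
          = fun k => ‖(q.2.2 - OmegaSeq α q.2.1) k‖ ^ 2 by rw [e]]
      exact mem2_iff.mp hq2.2
    refine ⟨(x, y), ⟨hxmem, unmask_mem α hxmem hOm0 hOm1⟩, ?_⟩
    -- Umap (x, y) = q
    have hu1 : Uodd x = q.1.1 := by rw [Uodd_eq, hA0]
    have hu2 : Uodd y = q.1.2 := by rw [Uodd_eq, hB0]
    have hu3 : Ueven x = q.2.1 := by rw [Ueven_eq, hA1]
    have hu4 : Ueven y = q.2.2 := by rw [Ueven_eq, hB1]
    show ((Uodd x, Uodd y), (Ueven x, Ueven y)) = q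
    rw [hu1, hu2, hu3, hu4]
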